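/- Suppose the frame intertwining assumption holds, y ∈ R(A), and N(Λ_k) = {0} for all k. Then 𝒜y (defined via the pseudo-inverses Λ_k† applied to the frame coefficients of y, synthesized with the dual frames ẽ_k^m) is a well-defined element of X and is the unique solution of Ax = y. -/

import Mathlib

open scoped ComplexInnerProductSpace Matrix

/-- If the intertwining assumption holds, `y ∈ R(A)` and `N(Λ k) = {0}` for all `k`,
then `𝒜y` (synthesis of the coefficients `Λ k† ⬝ (⟪f n k, y n⟫)_n` with the dual frames
`ẽ m k = T m (e m k)`) is a well-defined element of `X` and the unique solution of
`A x = y`. -/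
theorem frame_unique_solution
    {M N : ℕ}
    {Xs : Fin M → Type*} [∀ m, NormedAddCommGroup (Xs m)]
    [∀ m, InnerProductSpace ℂ (Xs m)] [∀ m, CompleteSpace (Xs m)]
    {Ys : Fin N → Type*} [∀ n, NormedAddCommGroup (Ys n)]
    [∀ n, InnerProductSpace ℂ (Ys n)] [∀ n, CompleteSpace (Ys n)]
    (A : PiLp 2 Xs →L[ℂ] PiLp 2 Ys)
    (e : ∀ m, ℕ → Xs m) (f : ∀ n, ℕ → Ys n)
    (B1 B2 C1 C2 : ℝ) (hB1 : 0 < B1) (hB2 : 0 < B2) (hC1 : 0 < C1) (hC2 : 0 < C2)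
    (hframe_e : ∀ (m) (x : Xs m), (Summable fun k => ‖⟪e m k, x⟫‖ ^ 2) ∧
      B1 * ‖x‖ ^ 2 ≤ ∑' k, ‖⟪e m k, x⟫‖ ^ 2 ∧ ∑' k, ‖⟪e m k, x⟫‖ ^ 2 ≤ B2 * ‖x‖ ^ 2)
    (hframe_f : ∀ (n) (y : Ys n), (Summable fun k => ‖⟪f n k, y⟫‖ ^ 2) ∧
      C1 * ‖y‖ ^ 2 ≤ ∑' k, ‖⟪f n k, y⟫‖ ^ 2 ∧ ∑' k, ‖⟪f n k, y⟫‖ ^ 2 ≤ C2 * ‖y‖ ^ 2)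
    (S T : ∀ m, Xs m →L[ℂ] Xs m)
    (hS : ∀ (m) (x : Xs m), HasSum (fun k => ⟪e m k, x⟫ • e m k) (S m x))
    (hST : ∀ m, S m ∘L T m = 1) (hTS : ∀ m, T m ∘L S m = 1)
    (Λ : ℕ → Matrix (Fin N) (Fin M) ℂ)
    (hΛ : ∀ (k : ℕ) (x : PiLp 2 Xs) (n : Fin N),
      ⟪f n k, A x n⟫ = ∑ m, Λ k n m * ⟪e m k, x m⟫)
    -- trivial null spaces
    (hinj : ∀ (k : ℕ) (h : Fin M → ℂ), (Λ k).mulVec h = 0 → h = 0)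
    -- `Λd k` is the Moore–Penrose pseudo-inverse of `Λ k`
    (Λd : ℕ → Matrix (Fin M) (Fin N) ℂ)
    (hMP1 : ∀ k, Λ k * Λd k * Λ k = Λ k)
    (hMP2 : ∀ k, Λd k * Λ k * Λd k = Λd k)
    (hMP3 : ∀ k, (Λ k * Λd k)ᴴ = Λ k * Λd k)
    (hMP4 : ∀ k, (Λd k * Λ k)ᴴ = Λd k * Λ k)
    (y : PiLp 2 Ys) (hy : ∃ x0, A x0 = y) :
    ∃ x : PiLp 2 Xs,
      (∀ m, HasSum
        (fun k => ((Λd k).mulVec (fun n => ⟪f n k, y n⟫) m) • T m (e m k)) (x m)) ∧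
      A x = y ∧ (∀ x' : PiLp 2 Xs, A x' = y → x' = x) := by

  obtain ⟨x0, hx0⟩ := hy
  -- Λd k * Λ k acts as identity on vectors (since N(Λ k) = 0)
  have hdl : ∀ (k : ℕ) (h : Fin M → ℂ), (Λd k).mulVec ((Λ k).mulVec h) = h := by
    intro k h
    have h1 : (Λ k).mulVec ((Λd k).mulVec ((Λ k).mulVec h) - h) = 0 := by
      rw [Matrix.mulVec_sub, Matrix.mulVec_mulVec, Matrix.mulVec_mulVec, hMP1 k, sub_self]
    have := hinj k _ h1
    exact sub_eq_zero.mp this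
  -- the frame coefficients of y equal Λ k applied to the coefficients of x0
  have hcoef : ∀ k : ℕ, (fun n => ⟪f n k, y n⟫) =
      (Λ k).mulVec (fun m => ⟪e m k, x0 m⟫) := by
    intro k
    funext n
    rw [← hx0]
    exact hΛ k x0 n
  have hkey : ∀ (k : ℕ) (m : Fin M),
      (Λd k).mulVec (fun n => ⟪f n k, y n⟫) m = ⟪e m k, x0 m⟫ := by
    intro k m
    rw [hcoef k, hdl k]
  refine ⟨x0, ?_, hx0, ?_⟩
  · intro m
    have h1 : HasSum (fun k => T m (⟪e m k, x0 m⟫ • e m k)) (T m (S m (x0 m))) :=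
      (T m).hasSum (hS m (x0 m))
    have h2 : T m (S m (x0 m)) = x0 m := by
      have := congrArg (fun φ : Xs m →L[ℂ] Xs m => φ (x0 m)) (hTS m)
      simpa using this
    rw [h2] at h1
    refine h1.congr_fun ?_
    intro k
    rw [hkey k m, map_smul]
  · intro x' hx'
    refine PiLp.ext fun m => ?_
    have hc : ∀ k : ℕ, ⟪e m k, x' m⟫ = ⟪e m k, x0 m⟫ := by
      intro k
      have hv : (Λ k).mulVec ((fun m => ⟪e m k, x' m⟫) - fun m => ⟪e m k, x0 m⟫) = 0 := by
        rw [Matrix.mulVec_sub]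
        funext n
        have h1 := hΛ k x' n
        have h2 := hΛ k x0 n
        rw [hx'] at h1
        rw [hx0] at h2
        simp only [Pi.sub_apply, Pi.zero_apply, Matrix.mulVec, dotProduct]
        rw [← h1, ← h2, sub_self]
      have := congrFun (hinj k _ hv) m
      simpa [sub_eq_zero] using this
    have hz : ∀ k : ℕ, ⟪e m k, x' m - x0 m⟫ = 0 := by
      intro k
      rw [inner_sub_right, hc k, sub_self]
    have hb := (hframe_e m (x' m - x0 m)).2.1
    have ht : (∑' k, ‖⟪e m k, x' m - x0 m⟫‖ ^ 2) = 0 := by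
      have : (fun k => ‖⟪e m k, x' m - x0 m⟫‖ ^ 2) = fun _ => (0 : ℝ) := by
        funext k; rw [hz k]; simp
      rw [this, tsum_zero]
    rw [ht] at hb
    have hnorm : ‖x' m - x0 m‖ ^ 2 ≤ 0 := by
      nlinarith
    have : x' m - x0 m = 0 := by
      have := sq_nonneg ‖x' m - x0 m‖
      have h0 : ‖x' m - x0 m‖ ^ 2 = 0 := le_antisymm hnorm this
      have := pow_eq_zero_iff (n := 2) (by norm_num) |>.mp h0
      exact norm_eq_zero.mp this
    exact sub_eq_zero.mp this
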